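/- arXiv:2305.09614 — 4 statements merged into one kernel-verified Lean document; each statement's English description precedes it below -/
import Mathlib

section
/- Let g: ℂ → ℂ be an entire function, α ∈ ℂ, R > 0, and let P ∈ ℂ[z] be a nonzero polynomial. Assume g(z) ≠ α for all z with |z| = R, that every zero of g − α in the open ball B(0, R) is a simple zero, and that every such zero is also a root of P. Then there exists δ > 0 such that for all real ε ∈ (0, δ), the function f(z) = g(z) + ε·P(z) satisfies f⁻¹({α}) ∩ B(0, R) = g⁻¹({α}) ∩ B(0, R). -/
open Filter Topology Metric

/-- If `g` is entire, `g ≠ α` on the circle `|z| = R`, every zero of `g − α` in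
`B(0,R)` is simple, and every such zero is a root of the nonzero polynomial `P`,
then for all small `ε > 0` the preimages of `α` in `B(0,R)` under `g + ε·P` and
under `g` coincide. -/
theorem preimage_stable_under_perturbation
    (g : ℂ → ℂ) (hg : Differentiable ℂ g) (α : ℂ) (R : ℝ) (hR : 0 < R)
    (P : Polynomial ℂ) (hP : P ≠ 0)
    (hbd : ∀ z : ℂ, ‖z‖ = R → g z ≠ α)
    (hsimple : ∀ z ∈ Metric.ball (0 : ℂ) R, g z = α → deriv g z ≠ 0)
    (hroot : ∀ z ∈ Metric.ball (0 : ℂ) R, g z = α → P.eval z = 0) :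
    ∃ δ : ℝ, 0 < δ ∧ ∀ ε : ℝ, 0 < ε → ε < δ →
      (fun z => g z + (ε : ℂ) * P.eval z) ⁻¹' {α} ∩ Metric.ball (0 : ℂ) R
        = g ⁻¹' {α} ∩ Metric.ball (0 : ℂ) R := by
  by_contra hcon
  push_neg at hcon
  have key : ∀ n : ℕ, ∃ ε : ℝ, ∃ z : ℂ, 0 < ε ∧ ε < 1/(n+1) ∧
      z ∈ Metric.ball (0:ℂ) R ∧ g z + (ε:ℂ) * P.eval z = α ∧ g z ≠ α := by
    intro n
    obtain ⟨ε, hε0, hεlt, hne⟩ := hcon (1/(n+1)) (by positivity)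
    have hsub : g ⁻¹' {α} ∩ Metric.ball (0:ℂ) R ⊆
        (fun z => g z + (ε:ℂ) * P.eval z) ⁻¹' {α} ∩ Metric.ball (0:ℂ) R := by
      rintro z ⟨hz1, hz2⟩
      refine ⟨?_, hz2⟩
      simp only [Set.mem_preimage, Set.mem_singleton_iff] at hz1 ⊢
      rw [hroot z hz2 hz1, hz1]; ring
    have hns : ¬ ((fun z => g z + (ε:ℂ) * P.eval z) ⁻¹' {α} ∩ Metric.ball (0:ℂ) R ⊆
        g ⁻¹' {α} ∩ Metric.ball (0:ℂ) R) := fun h => hne (le_antisymm h hsub)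
    obtain ⟨z, hz, hz'⟩ := Set.not_subset.mp hns
    refine ⟨ε, z, hε0, hεlt, hz.2, hz.1, ?_⟩
    intro hgz
    exact hz' ⟨hgz, hz.2⟩
  choose ε z hε0 hεlt hzball hfz hgz using key
  obtain ⟨w, hw, φ, hφ, hlim⟩ := (isCompact_closedBall (0:ℂ) R).tendsto_subseq
    (fun n => Metric.ball_subset_closedBall (hzball n))
  -- ε → 0 along φ
  have hεlim : Tendsto (fun n => ε (φ n)) atTop (𝓝 0) := by
    have h1 : Tendsto (fun n : ℕ => 1/((n:ℝ)+1)) atTop (𝓝 0) :=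
      tendsto_one_div_add_atTop_nhds_zero_nat
    have h2 : Tendsto (fun n => ε n) atTop (𝓝 0) :=
      squeeze_zero (fun n => (hε0 n).le) (fun n => (hεlt n).le) h1
    exact h2.comp hφ.tendsto_atTop
  have hεlimC : Tendsto (fun n => ((ε (φ n) : ℝ) : ℂ)) atTop (𝓝 0) := by
    have := (Complex.continuous_ofReal.tendsto 0).comp hεlim
    exact this
  -- g w = α
  have hglim : Tendsto (fun n => g (z (φ n))) atTop (𝓝 (g w)) :=
    (hg.continuous.tendsto w).comp hlim
  have hPlim : Tendsto (fun n => P.eval (z (φ n))) atTop (𝓝 (P.eval w)) :=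
    ((P.continuous_aeval.tendsto w).comp hlim)
  have hglim2 : Tendsto (fun n => g (z (φ n))) atTop (𝓝 α) := by
    have heq : ∀ n, g (z (φ n)) = α - (ε (φ n) : ℂ) * P.eval (z (φ n)) := by
      intro n
      have := hfz (φ n)
      linear_combination this
    have : Tendsto (fun n => α - (ε (φ n) : ℂ) * P.eval (z (φ n))) atTop (𝓝 (α - 0 * P.eval w)) :=
      tendsto_const_nhds.sub (hεlimC.mul hPlim)
    simpa [heq] using this
  have hgw : g w = α := tendsto_nhds_unique hglim hglim2
  -- w ∈ ball
  have hwball : w ∈ Metric.ball (0:ℂ) R := by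
    rcases lt_or_eq_of_le (Metric.mem_closedBall.mp hw) with h | h
    · exact Metric.mem_ball.mpr h
    · exact absurd hgw (hbd w (by simpa [Complex.dist_eq] using h))
  have hPw : P.eval w = 0 := hroot w hwball hgw
  -- factor P
  obtain ⟨Q, hQ⟩ := Polynomial.dvd_iff_isRoot.mpr hPw
  -- z (φ n) ≠ w
  have hne : ∀ n, z (φ n) ≠ w := by
    intro n h
    exact hgz (φ n) (h ▸ hgw)
  have hlim' : Tendsto (fun n => z (φ n)) atTop (𝓝[≠] w) := by
    rw [tendsto_nhdsWithin_iff]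
    exact ⟨hlim, Filter.Eventually.of_forall (fun n => hne n)⟩
  -- slope tends to deriv g w
  have hderiv : Tendsto (fun n => slope g w (z (φ n))) atTop (𝓝 (deriv g w)) := by
    have := (hasDerivAt_iff_tendsto_slope.mp (hg w).hasDerivAt)
    exact this.comp hlim'
  -- slope equals - ε * Q.eval
  have hslope : ∀ n, slope g w (z (φ n)) = -(ε (φ n) : ℂ) * Q.eval (z (φ n)) := by
    intro n
    have hzne : z (φ n) - w ≠ 0 := sub_ne_zero.mpr (hne n)
    have hPz : P.eval (z (φ n)) = (z (φ n) - w) * Q.eval (z (φ n)) := by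
      rw [hQ]; simp [Polynomial.eval_mul]
    have hgzn : g (z (φ n)) - g w = -(ε (φ n) : ℂ) * ((z (φ n) - w) * Q.eval (z (φ n))) := by
      rw [hgw, ← hPz]
      linear_combination hfz (φ n)
    rw [slope_def_field, hgzn, div_eq_iff hzne]
    ring
  have hQlim : Tendsto (fun n => Q.eval (z (φ n))) atTop (𝓝 (Q.eval w)) :=
    (Q.continuous_aeval.tendsto w).comp hlim
  have hzero : Tendsto (fun n => slope g w (z (φ n))) atTop (𝓝 0) := by
    have : Tendsto (fun n => -(ε (φ n) : ℂ) * Q.eval (z (φ n))) atTop (𝓝 (-0 * Q.eval w)) :=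
      (hεlimC.neg.mul hQlim)
    simpa [funext hslope] using this
  have : deriv g w = 0 := tendsto_nhds_unique hderiv hzero
  exact hsimple w hwball hgw this
end

section
/- Let g: ℂ → ℂ be a transcendental entire function and let P ∈ ℂ[z] be a nonzero polynomial. Then the entire function z ↦ g'(z)·P(z) − g(z)·P'(z) is not a polynomial function; equivalently, if g: ℂ → ℂ is entire, P ∈ ℂ[z] is nonzero, and g'·P − g·P' agrees with a polynomial function on ℂ, then g is a polynomial function. -/
open Polynomial

lemma exists_antideriv (Q : ℂ[X]) : ∃ A : ℂ[X], derivative A = Q := by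
  induction Q using Polynomial.induction_on' with
  | add p q hp hq =>
    obtain ⟨A, hA⟩ := hp; obtain ⟨B, hB⟩ := hq
    exact ⟨A + B, by simp [hA, hB]⟩
  | monomial n c =>
    refine ⟨C (c / (n + 1)) * X ^ (n + 1), ?_⟩
    rw [derivative_C_mul, derivative_X_pow, Nat.add_sub_cancel, Nat.cast_add, Nat.cast_one,
      ← mul_assoc, ← C_mul,
      div_mul_cancel₀ _ (by exact_mod_cast (Nat.cast_add_one_ne_zero n : (n+1:ℂ) ≠ 0)),
      C_mul_X_pow_eq_monomial]

lemma wron_aux (n : ℕ) : ∀ (g : ℂ → ℂ), Differentiable ℂ g → ∀ (P Q : ℂ[X]), P ≠ 0 →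
    P.natDegree = n →
    (∀ z : ℂ, deriv g z * P.eval z - g z * (derivative P).eval z = Q.eval z) →
    ∃ G : ℂ[X], ∀ z : ℂ, g z = G.eval z := by
  induction n with
  | zero =>
    intro g hg P Q hP hdeg hQ
    have hPC : P = C (P.coeff 0) := eq_C_of_natDegree_eq_zero hdeg
    set c := P.coeff 0 with hc
    have hc0 : c ≠ 0 := fun h => hP (by rw [hPC, h, map_zero])
    obtain ⟨A, hA⟩ := exists_antideriv (C c⁻¹ * Q)
    have hderivg : ∀ z, deriv g z = (derivative A).eval z := by
      intro z
      have h1 := hQ z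
      rw [hPC] at h1
      simp only [eval_C, derivative_C, eval_zero, mul_zero, sub_zero] at h1
      rw [hA, eval_mul, eval_C]
      field_simp
      linear_combination h1
    -- g - eval A is constant
    have hAf : Differentiable ℂ fun z => A.eval z := A.differentiable
    have hconst : ∀ z : ℂ, g z - A.eval z = g 0 - A.eval 0 := by
      intro z
      apply is_const_of_deriv_eq_zero (hg.sub hAf)
      intro x
      rw [deriv_sub (hg x) (hAf x), Polynomial.deriv, hderivg x, sub_self]
    refine ⟨A + C (g 0 - A.eval 0), fun z => ?_⟩
    have := hconst z
    simp only [eval_add, eval_C]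
    linear_combination this
  | succ n IH =>
    intro g hg P Q hP hdeg hQ
    obtain ⟨a, ha⟩ : ∃ a, P.IsRoot a := by
      apply Complex.exists_root
      rw [← natDegree_pos_iff_degree_pos, hdeg]; omega
    set P₁ := P /ₘ (X - C a) with hP₁def
    have hfac : (X - C a) * P₁ = P := mul_divByMonic_eq_iff_isRoot.2 ha
    have hP₁ : P₁ ≠ 0 := fun h => hP (by rw [← hfac, h, mul_zero])
    have hdeg₁ : P₁.natDegree = n := by
      have := natDegree_mul (X_sub_C_ne_zero a) hP₁
      rw [hfac, natDegree_X_sub_C, hdeg] at this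
      omega
    set h := dslope g a with hhdef
    have hh : Differentiable ℂ h := by
      rw [← differentiableOn_univ]
      exact (Complex.differentiableOn_dslope Filter.univ_mem).mpr hg.differentiableOn
    have hgz : ∀ z, g z = g a + (z - a) * h z := by
      intro z
      have := sub_smul_dslope g a z
      rw [smul_eq_mul, ← hhdef] at this
      linear_combination -this
    have hg' : ∀ z, deriv g z = h z + (z - a) * deriv h z := by
      intro z
      have hd : HasDerivAt (fun w => g a + (w - a) * h w)
          (1 * h z + (z - a) * deriv h z) z :=
        (((hasDerivAt_id z).sub_const a).mul (hh z).hasDerivAt).const_add (g a)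
      have hge : g = fun w => g a + (w - a) * h w := funext hgz
      rw [← hge] at hd
      rw [hd.deriv]; ring
    have hder : derivative P = P₁ + (X - C a) * derivative P₁ := by
      rw [← hfac, derivative_mul]
      simp
    -- continuity of deriv h
    have hcd : Continuous (deriv h) := by
      have h1 : AnalyticOnNhd ℂ h Set.univ := fun z _ => hh.analyticAt z
      have h2 := h1.deriv
      exact (differentiableOn_univ.mp h2.differentiableOn).continuous
    set w : ℂ → ℂ := fun z => deriv h z * P₁.eval z - h z * (derivative P₁).eval z with hwdef
    have hwc : Continuous w :=
      (hcd.mul (P₁.continuous_aeval)).sub (hh.continuous.mul ((derivative P₁).continuous_aeval))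
    have key : ∀ z, (z - a) ^ 2 * w z = Q.eval z + g a * (derivative P).eval z := by
      intro z
      have h1 := hQ z
      have hPz : P.eval z = (z - a) * P₁.eval z := by rw [← hfac]; simp
      have hP'z : (derivative P).eval z = P₁.eval z + (z - a) * (derivative P₁).eval z := by
        rw [hder]; simp
      rw [hg' z, hgz z, hPz, hP'z] at h1
      simp only [hwdef, hP'z]
      linear_combination h1
    set R : ℂ[X] := Q + C (g a) * derivative P with hRdef
    have key2 : ∀ z, R.eval z = (z - a) ^ 2 * w z := by
      intro z; rw [key z]; simp [hRdef]
    have hRa : R.IsRoot a := by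
      have := key2 a; simp at this; simpa [IsRoot] using this
    set R₁ := R /ₘ (X - C a) with hR₁def
    have hfacR : (X - C a) * R₁ = R := mul_divByMonic_eq_iff_isRoot.2 hRa
    have claim1 : (fun z => R₁.eval z) = fun z => (z - a) * w z := by
      apply Continuous.ext_on (dense_compl_singleton a) R₁.continuous_aeval
        ((continuous_id.sub continuous_const).mul hwc)
      intro z hz
      have hza : z - a ≠ 0 := sub_ne_zero.2 hz
      have h2 := key2 z
      rw [← hfacR] at h2
      simp only [eval_mul, eval_sub, eval_X, eval_C] at h2
      field_simp at h2 ⊢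
      have : (z - a) * R₁.eval z = (z - a) * ((z - a) * w z) := by rw [h2]
      exact mul_left_cancel₀ hza this
    have hR₁a : R₁.IsRoot a := by
      have := congrFun claim1 a; simp at this; simpa [IsRoot] using this
    set R₂ := R₁ /ₘ (X - C a) with hR₂def
    have hfacR₂ : (X - C a) * R₂ = R₁ := mul_divByMonic_eq_iff_isRoot.2 hR₁a
    have claim2 : (fun z => R₂.eval z) = w := by
      apply Continuous.ext_on (dense_compl_singleton a) R₂.continuous_aeval hwc
      intro z hz
      have hza : z - a ≠ 0 := sub_ne_zero.2 hz
      have h2 := congrFun claim1 z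
      rw [← hfacR₂] at h2
      simp only [eval_mul, eval_sub, eval_X, eval_C] at h2
      exact mul_left_cancel₀ hza h2
    obtain ⟨G₁, hG₁⟩ := IH h hh P₁ R₂ hP₁ hdeg₁
      (fun z => by have := congrFun claim2 z; simp only [hwdef] at this; exact this.symm)
    refine ⟨C (g a) + (X - C a) * G₁, fun z => ?_⟩
    rw [hgz z, hG₁ z]
    simp

/-- If `g` is entire, `P` is a nonzero polynomial, and `g'·P − g·P'` agrees with
a polynomial function on `ℂ`, then `g` is a polynomial function. (Hence for a
transcendental entire `g`, `g'·P − g·P'` is never a polynomial function.) -/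
theorem wronskian_polynomial_implies_polynomial
    (g : ℂ → ℂ) (hg : Differentiable ℂ g)
    (P : Polynomial ℂ) (hP : P ≠ 0)
    (Q : Polynomial ℂ)
    (hQ : ∀ z : ℂ,
      deriv g z * P.eval z - g z * (Polynomial.derivative P).eval z = Q.eval z) :
    ∃ G : Polynomial ℂ, ∀ z : ℂ, g z = G.eval z :=
  wron_aux P.natDegree g hg P Q hP rfl hQ
end

section
/- Let g: ℂ → ℂ be a transcendental entire function, let Q ∈ ℂ[z] be a nonzero polynomial, and let α ∈ ℂ. Then there is at most one ε ∈ ℂ such that α does not belong to the image of the function z ↦ g(z) + ε·Q(z). -/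
open Complex Metric Set
open scoped NNReal

/-- Coefficient bound: if a power series converges everywhere, coefficients times R^n are
summable in norm for every R. -/
lemma aux_summable_norm {a : ℕ → ℂ} (h : ∀ z : ℂ, Summable fun n => a n * z ^ n)
    {R : ℝ} (hR : 0 ≤ R) : Summable fun n => ‖a n‖ * R ^ n := by
  have h2 : Summable fun n => a n * ((2 * R + 1 : ℝ) : ℂ) ^ n := h _
  have htend := h2.tendsto_atTop_zero
  have hb : BddAbove (Set.range fun n => ‖a n * ((2 * R + 1 : ℝ) : ℂ) ^ n‖) :=
    (htend.norm.bddAbove_range)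
  obtain ⟨C, hC⟩ := hb
  have hCb : ∀ n, ‖a n‖ * (2 * R + 1) ^ n ≤ C := by
    intro n
    have := hC (Set.mem_range_self n)
    rwa [norm_mul, norm_pow, Complex.norm_real, Real.norm_eq_abs,
      _root_.abs_of_nonneg (by linarith : (0:ℝ) ≤ 2*R+1)] at this
  have hq : R / (2 * R + 1) < 1 := by
    rw [div_lt_one (by linarith)]; linarith
  have hq0 : 0 ≤ R / (2 * R + 1) := div_nonneg hR (by linarith)
  apply Summable.of_nonneg_of_le (fun n => by positivity)
    (fun n => ?_) ((summable_geometric_of_lt_one hq0 hq).mul_left C)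
  have hpos : (0:ℝ) < (2 * R + 1) ^ n := by positivity
  have hEq : ‖a n‖ * R ^ n = (‖a n‖ * (2 * R + 1) ^ n) * (R / (2 * R + 1)) ^ n := by
    rw [div_pow]; field_simp
  rw [hEq]
  exact mul_le_mul_of_nonneg_right (hCb n) (by positivity)

/-- Every entire function has a primitive. -/
lemma entire_primitive (f : ℂ → ℂ) (hf : Differentiable ℂ f) :
    ∃ F : ℂ → ℂ, ∀ z, HasDerivAt F (f z) z := by
  set a : ℕ → ℂ := fun n => (Nat.factorial n : ℂ)⁻¹ * iteratedDeriv n f 0 with ha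
  have hsum : ∀ z : ℂ, HasSum (fun n => a n * z ^ n) (f z) := by
    intro z
    have := hasSum_taylorSeries_of_entire hf 0 z
    simpa [ha, sub_zero, smul_eq_mul, mul_comm, mul_assoc, mul_left_comm] using this
  refine ⟨fun z => ∑' n, a n / (n + 1) * z ^ (n + 1), fun y => ?_⟩
  have key : HasDerivAt (fun z => ∑' n, a n / (n + 1) * z ^ (n + 1))
      (∑' n, a n * y ^ n) y := by
    set R : ℝ := ‖y‖ + 1 with hRdef
    have hy : y ∈ ball (0 : ℂ) R := by simp [hRdef]
    refine hasDerivAt_tsum_of_isPreconnected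
      (u := fun n => ‖a n‖ * R ^ n)
      (aux_summable_norm (fun z => (hsum z).summable) (by positivity))
      isOpen_ball (convex_ball _ _).isPreconnected
      (g := fun n z => a n / (n + 1) * z ^ (n + 1))
      (g' := fun n z => a n * z ^ n)
      (fun n z _ => ?_) (fun n z hz => ?_) (mem_ball_self (by positivity)) ?_ hy
    · have h1 : HasDerivAt (fun w : ℂ => w ^ (n + 1)) ((n + 1 : ℕ) * z ^ n) z := by
        simpa using hasDerivAt_pow (n + 1) z
      have := h1.const_mul (a n / (n + 1))
      refine this.congr_deriv ?_
      have hne : ((n : ℂ) + 1) ≠ 0 := Nat.cast_add_one_ne_zero n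
      push_cast
      rw [div_mul_eq_mul_div, div_eq_iff hne]
      ring
    · rw [mem_ball_zero_iff] at hz
      calc ‖a n * z ^ n‖ = ‖a n‖ * ‖z‖ ^ n := by rw [norm_mul, norm_pow]
        _ ≤ ‖a n‖ * R ^ n := by
            apply mul_le_mul_of_nonneg_left (pow_le_pow_left₀ (norm_nonneg _) hz.le n)
              (norm_nonneg _)
    · simpa using summable_zero
  rw [(hsum y).tsum_eq] at key
  exact key

/-- Every nonvanishing entire function has an entire logarithm. -/
lemma entire_log (f : ℂ → ℂ) (hf : Differentiable ℂ f) (h0 : ∀ z, f z ≠ 0) :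
    ∃ L : ℂ → ℂ, Differentiable ℂ L ∧ ∀ z, Complex.exp (L z) = f z := by
  have hdf : Differentiable ℂ (deriv f) := by
    have := (analyticOnNhd_univ_iff_differentiable.mpr hf).deriv
    exact fun z => (this z (mem_univ z)).differentiableAt
  obtain ⟨F, hF⟩ := entire_primitive (fun z => deriv f z / f z) (hdf.div hf h0)
  have hFd : Differentiable ℂ F := fun z => (hF z).differentiableAt
  -- f * exp (-F) is constant
  have hconst : ∀ z, f z * Complex.exp (-F z) = f 0 * Complex.exp (-F 0) := by
    have : ∀ z, deriv (fun w => f w * Complex.exp (-F w)) z = 0 := by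
      intro z
      have h1 : HasDerivAt f (deriv f z) z := (hf z).hasDerivAt
      have h2 : HasDerivAt (fun w => Complex.exp (-F w)) 
          (Complex.exp (-F z) * (-(deriv f z / f z))) z := by
        have := ((hF z).neg).cexp
        simpa using this
      have h3 := h1.mul h2
      rw [show (fun w => f w * Complex.exp (-F w)) = f * fun w => Complex.exp (-F w) from rfl, h3.deriv]
      field_simp [h0 z]
      ring
    intro z
    have := is_const_of_deriv_eq_zero (f := fun w => f w * Complex.exp (-F w))
      (hf.mul (hFd.neg.cexp)) this z 0
    exact this
  have hc0 : f 0 * Complex.exp (-F 0) ≠ 0 := mul_ne_zero (h0 0) (Complex.exp_ne_zero _)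
  refine ⟨fun z => F z + Complex.log (f 0 * Complex.exp (-F 0)), hFd.add_const _, fun z => ?_⟩
  rw [Complex.exp_add, Complex.exp_log hc0]
  have := hconst z
  have hez : Complex.exp (-F z) ≠ 0 := Complex.exp_ne_zero _
  rw [← this, Complex.exp_neg]
  field_simp

/-- Nonvanishing entire functions have entire square roots. -/
lemma entire_sqrt (f : ℂ → ℂ) (hf : Differentiable ℂ f) (h0 : ∀ z, f z ≠ 0) :
    ∃ p : ℂ → ℂ, Differentiable ℂ p ∧ ∀ z, p z ^ 2 = f z := by
  obtain ⟨L, hL, hLe⟩ := entire_log f hf h0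
  exact ⟨fun z => Complex.exp (L z / 2), (hL.div_const 2).cexp, fun z => by
    rw [← Complex.exp_nat_mul]
    push_cast
    rw [show (2 : ℂ) * (L z / 2) = L z by ring, hLe]⟩

/-- Landau-type theorem: the range of an entire function with a nonvanishing derivative
somewhere contains closed balls of any prescribed radius. -/
lemma landau (h : ℂ → ℂ) (hd : Differentiable ℂ h) {z₀ : ℂ} (hz : deriv h z₀ ≠ 0)
    (R : ℝ) (hR : 0 < R) : ∃ c : ℂ, closedBall c R ⊆ Set.range h := by
  have hd' : Differentiable ℂ (deriv h) := by
    have := (analyticOnNhd_univ_iff_differentiable.mpr hd).deriv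
    exact fun z => (this z (mem_univ z)).differentiableAt
  set K : ℝ := ‖deriv h z₀‖ with hKdef
  have hK : 0 < K := norm_pos_iff.mpr hz
  set ρ : ℝ := 80 * (R + 1) / K with hρdef
  have hρ : 0 < ρ := by positivity
  set φ : ℂ → ℝ := fun z => (ρ - dist z z₀) * ‖deriv h z‖ with hφdef
  have hφc : Continuous φ :=
    (continuous_const.sub (continuous_id.dist continuous_const)).mul hd'.continuous.norm
  obtain ⟨a, ha_mem, ha_max'⟩ := (isCompact_closedBall z₀ ρ).exists_isMaxOn
    ⟨z₀, mem_closedBall_self hρ.le⟩ hφc.continuousOn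
  have ha_max : ∀ z ∈ closedBall z₀ ρ, φ z ≤ φ a := fun z hz => ha_max' hz
  have hφa : ρ * K ≤ φ a := by
    have := ha_max z₀ (mem_closedBall_self hρ.le)
    simpa [hφdef, dist_self] using this
  set M : ℝ := ‖deriv h a‖ with hMdef
  have hM0 : 0 ≤ M := norm_nonneg _
  set t : ℝ := (ρ - dist a z₀) / 2 with htdef
  have hdist_a : dist a z₀ = ρ - 2 * t := by rw [htdef]; ring
  have hφa_eq : φ a = 2 * t * M := by
    show (ρ - dist a z₀) * ‖deriv h a‖ = 2 * t * M
    rw [hdist_a, ← hMdef]; ring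
  have hρK : 0 < ρ * K := by positivity
  have ht : 0 < t := by nlinarith [hφa, hφa_eq]
  have hM : 0 < M := by nlinarith [hφa, hφa_eq]
  -- Step B: derivative bounded by 2M on ball a t
  have hB : ∀ z ∈ ball a t, ‖deriv h z‖ ≤ 2 * M := by
    intro z hzt
    rw [mem_ball] at hzt
    have hzz₀ : dist z z₀ ≤ ρ - t := by
      calc dist z z₀ ≤ dist z a + dist a z₀ := dist_triangle _ _ _
        _ ≤ t + (ρ - 2 * t) := by rw [← hdist_a]; linarith
        _ = ρ - t := by ring
    have hmem : z ∈ closedBall z₀ ρ := by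
      rw [mem_closedBall]; linarith
    have hφz : φ z ≤ 2 * t * M := by rw [← hφa_eq]; exact ha_max z hmem
    have h1 : t * ‖deriv h z‖ ≤ φ z := by
      rw [hφdef]
      apply mul_le_mul_of_nonneg_right _ (norm_nonneg _)
      linarith
    have := le_trans h1 hφz
    nlinarith [norm_nonneg (deriv h z)]
  -- Step C: Schwarz estimate
  have hSch : ∀ z ∈ ball a t, dist (deriv h z) (deriv h a) ≤ 4 * M / t * dist z a := by
    intro z hzt
    refine Complex.dist_le_div_mul_dist_of_mapsTo_ball hd'.differentiableOn ?_ hzt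
    intro w hwt
    rw [mem_closedBall, dist_eq_norm]
    calc ‖deriv h w - deriv h a‖ ≤ ‖deriv h w‖ + ‖deriv h a‖ := norm_sub_le _ _
      _ ≤ 2 * M + M := by have := hB w hwt; linarith
      _ ≤ 4 * M := by linarith
  -- Step D: approximation and surjectivity
  set r : ℝ := t / 32 with hrdef
  have hr : 0 < r := by positivity
  set A : ℂ →L[ℂ] ℂ := (deriv h a) • (ContinuousLinearMap.id ℂ ℂ) with hAdef
  have hA_apply : ∀ u : ℂ, A u = deriv h a * u := fun u => rfl
  set c' : ℝ≥0 := (M / 8).toNNReal with hc'def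
  have hc' : (c' : ℝ) = M / 8 := Real.coe_toNNReal _ (by positivity)
  have hrt : ∀ x ∈ closedBall a r, x ∈ ball a t := by
    intro x hx
    rw [mem_closedBall] at hx
    rw [mem_ball]
    have : r < t := by rw [hrdef]; linarith
    linarith
  have approx : ApproximatesLinearOn h A (closedBall a r) c' := by
    intro x hx y hy
    have key : ∀ w ∈ closedBall a r, ∀ v ∈ closedBall a r,
        ‖(h w - deriv h a * w) - (h v - deriv h a * v)‖ ≤ M / 8 * ‖w - v‖ := by
      intro w hw v hv
      refine Convex.norm_image_sub_le_of_norm_hasDerivWithin_le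
        (f := fun u => h u - deriv h a * u) (f' := fun u => deriv h u - deriv h a)
        (fun u hu => by
          have := (((hd u).hasDerivAt).sub
            ((hasDerivAt_id u).const_mul (deriv h a))).hasDerivWithinAt (s := closedBall a r)
          rw [mul_one] at this
          exact this)
        (fun u hu => ?_) (convex_closedBall a r) hv hw
      have h1 := hSch u (hrt u hu)
      rw [dist_eq_norm] at h1
      rw [mem_closedBall] at hu
      calc ‖deriv h u - deriv h a‖ ≤ 4 * M / t * dist u a := h1
        _ ≤ 4 * M / t * r := by
            apply mul_le_mul_of_nonneg_left hu (by positivity)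
        _ = M / 8 := by rw [hrdef]; field_simp; ring
    have := key x hx y hy
    rw [hc']
    calc ‖h x - h y - A (x - y)‖ = ‖(h x - deriv h a * x) - (h y - deriv h a * y)‖ := by
          rw [hA_apply]; ring_nf
      _ ≤ M / 8 * ‖x - y‖ := this
  have hMne : deriv h a ≠ 0 := by
    rw [← norm_pos_iff, ← hMdef]; exact hM
  set fsymm : A.NonlinearRightInverse :=
    { toFun := fun y => (deriv h a)⁻¹ * y
      nnnorm := ‖(deriv h a)⁻¹‖₊
      bound' := fun y => by rw [norm_mul]; simp [coe_nnnorm]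
      right_inv' := fun y => by
        rw [hA_apply]
        field_simp } with hfsymmdef
  have hsurj := approx.surjOn_closedBall_of_nonlinearRightInverse fsymm hr.le
    (subset_refl (closedBall a r))
  have hnn : ((fsymm.nnnorm : ℝ))⁻¹ = M := by
    rw [hfsymmdef]
    simp only [coe_nnnorm, norm_inv, inv_inv]
    exact hMdef.symm
  refine ⟨h a, fun y hy => ?_⟩
  have hrad : R ≤ ((fsymm.nnnorm : ℝ)⁻¹ - c') * r := by
    rw [hnn, hc', hrdef]
    have h1 : ρ * K = 80 * (R + 1) := by
      rw [hρdef]; field_simp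
    nlinarith [hφa, hφa_eq]
  have hy' : y ∈ closedBall (h a) (((fsymm.nnnorm : ℝ)⁻¹ - c') * r) := by
    rw [mem_closedBall] at hy ⊢
    linarith
  obtain ⟨x, _, hx⟩ := hsurj hy'
  exact ⟨x, hx⟩

noncomputable def gridc (n : ℕ) : ℝ := (2 * n + 1) + Real.sqrt ((2 * n + 1) ^ 2 - 1)

noncomputable def gx (n : ℕ) : ℝ := Real.log (gridc n)

lemma gridc_lb (n : ℕ) : (2 * (n:ℝ) + 1) ≤ gridc n := by
  have h1 : (0:ℝ) ≤ Real.sqrt ((2 * n + 1) ^ 2 - 1) := Real.sqrt_nonneg _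
  unfold gridc; linarith

lemma gridc_pos (n : ℕ) : (0:ℝ) < gridc n := by
  have := gridc_lb n
  have : (0:ℝ) < 2 * (n:ℝ) + 1 := by positivity
  linarith [gridc_lb n]

lemma gx_zero : gx 0 = 0 := by
  simp [gx, gridc]

lemma gx_cosh (n : ℕ) : Real.cosh (gx n) = 2 * n + 1 := by
  have harg : (0:ℝ) ≤ (2 * (n:ℝ) + 1) ^ 2 - 1 := by nlinarith [(by positivity : (0:ℝ) ≤ (n:ℝ))]
  have hs : Real.sqrt ((2 * (n:ℝ) + 1) ^ 2 - 1) ^ 2 = (2 * (n:ℝ) + 1) ^ 2 - 1 :=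
    Real.sq_sqrt harg
  have hinv : (gridc n)⁻¹ = (2 * n + 1) - Real.sqrt ((2 * n + 1) ^ 2 - 1) := by
    apply inv_eq_of_mul_eq_one_right
    unfold gridc
    nlinarith [hs]
  rw [gx, Real.cosh_log (gridc_pos n), hinv]
  unfold gridc
  ring

lemma gx_gap (n : ℕ) : gx (n + 1) ≤ gx n + 2 := by
  have h1 : gridc (n + 1) ≤ 6 * gridc n := by
    have hsle : Real.sqrt ((2 * (↑(n+1):ℝ) + 1) ^ 2 - 1) ≤ 2 * (↑(n+1):ℝ) + 1 := by
      have h0 : Real.sqrt ((2 * (↑(n+1):ℝ) + 1) ^ 2 - 1) ≤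
          Real.sqrt ((2 * (↑(n+1):ℝ) + 1) ^ 2) := Real.sqrt_le_sqrt (by linarith)
      rwa [Real.sqrt_sq (by positivity)] at h0
    have hlb := gridc_lb n
    have hnn : (0:ℝ) ≤ (n:ℝ) := by positivity
    unfold gridc at *
    push_cast at *
    linarith
  have h2 : Real.log (gridc (n+1)) ≤ Real.log (6 * gridc n) :=
    Real.log_le_log (gridc_pos _) h1
  rw [Real.log_mul (by norm_num) (ne_of_gt (gridc_pos n))] at h2
  have h3 : Real.log 6 ≤ 2 := by
    rw [Real.log_le_iff_le_exp (by norm_num)]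
    have := Real.exp_one_gt_d9
    have h4 : Real.exp 2 = Real.exp 1 * Real.exp 1 := by
      rw [← Real.exp_add]; norm_num
    nlinarith
  unfold gx
  linarith

lemma gx_unbounded (x : ℝ) : ∃ k, x < gx k := by
  obtain ⟨k, hk⟩ := exists_nat_gt (Real.exp x)
  refine ⟨k, ?_⟩
  have h1 : Real.exp x < gridc k := by
    have := gridc_lb k
    have hk2 : (k:ℝ) ≤ 2 * k + 1 := by
      have : (0:ℝ) ≤ (k:ℝ) := by positivity
      linarith
    linarith [gridc_lb k]
  calc x = Real.log (Real.exp x) := (Real.log_exp x).symm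
    _ < Real.log (gridc k) := Real.log_lt_log (Real.exp_pos x) h1

/-- Every closed ball of radius 6 contains a point where `cosh` takes an odd
positive integer value. -/
lemma grid_exists (c : ℂ) : ∃ ω : ℂ, dist ω c ≤ 6 ∧ ∃ m : ℕ,
    Complex.cosh ω = 2 * m + 1 := by
  set x := c.re with hx
  set y := c.im with hy
  -- find n with gx n ≤ |x| ≤ gx n + 2
  have hex : ∃ k, |x| < gx k := gx_unbounded |x|
  set N := Nat.find hex with hN
  have hNspec : |x| < gx N := Nat.find_spec hex
  have hN0 : N ≠ 0 := by
    intro h0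
    rw [h0, gx_zero] at hNspec
    exact absurd hNspec (not_lt.mpr (abs_nonneg x))
  obtain ⟨n, hn⟩ : ∃ n, N = n + 1 := ⟨N - 1, (Nat.succ_pred_eq_of_ne_zero hN0).symm⟩
  have hnle : gx n ≤ |x| := by
    have := Nat.find_min hex (by omega : n < N)
    linarith [not_lt.mp this]
  have hnub : |x| ≤ gx n + 2 := by
    have := gx_gap n
    rw [hn] at hNspec
    linarith
  set ε : ℝ := if 0 ≤ x then 1 else -1 with hε
  set k₀ : ℤ := round (y / (2 * Real.pi)) with hk₀
  set ω : ℂ := ((ε * gx n : ℝ) : ℂ) + ((2 * Real.pi * k₀ : ℝ) : ℂ) * I with hω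
  have him : |2 * Real.pi * k₀ - y| ≤ Real.pi := by
    have h1 := abs_sub_round (y / (2 * Real.pi))
    have hπ : (0:ℝ) < 2 * Real.pi := by positivity
    have h2 : |y / (2 * Real.pi) - k₀| ≤ 1/2 := by
      rw [hk₀]; exact h1
    have h3 : y - 2 * Real.pi * k₀ = (y / (2 * Real.pi) - k₀) * (2 * Real.pi) := by
      field_simp
    rw [abs_sub_comm, h3, abs_mul, _root_.abs_of_pos hπ]
    nlinarith [Real.pi_pos]
  have hre : |ε * gx n - x| ≤ 2 := by
    rw [hε]
    split_ifs with hx0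
    · rw [_root_.abs_of_nonneg hx0] at hnle hnub
      rw [abs_le]; constructor <;> linarith
    · push_neg at hx0
      rw [_root_.abs_of_neg hx0] at hnle hnub
      rw [abs_le]; constructor <;> linarith
  refine ⟨ω, ?_, n, ?_⟩
  · have hd : dist ω c = ‖ω - c‖ := dist_eq_norm _ _
    rw [hd]
    have h1 : (ω - c).re = ε * gx n - x := by
      simp [hω, hx, sub_re, add_re, ofReal_re, mul_re, I_re, I_im, ofReal_im]
    have h2 : (ω - c).im = 2 * Real.pi * k₀ - y := by
      simp [hω, hy, sub_im, add_im, ofReal_im, mul_im, I_re, I_im, ofReal_re]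
    calc ‖ω - c‖ ≤ |(ω - c).re| + |(ω - c).im| :=
          Complex.norm_le_abs_re_add_abs_im _
      _ ≤ 2 + Real.pi := by rw [h1, h2]; exact add_le_add hre him
      _ ≤ 6 := by linarith [Real.pi_le_four]
  · rw [hω, Complex.cosh_add, Complex.cosh_mul_I, Complex.sinh_mul_I]
    have hcos : Complex.cos ((2 * Real.pi * k₀ : ℝ) : ℂ) = 1 := by
      rw [← Complex.ofReal_cos]
      norm_cast
      rw [show 2 * Real.pi * (k₀:ℝ) = (k₀:ℝ) * (2 * Real.pi) by ring]
      exact Real.cos_int_mul_two_pi k₀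
    have hsin : Complex.sin ((2 * Real.pi * k₀ : ℝ) : ℂ) = 0 := by
      rw [← Complex.ofReal_sin]
      norm_cast
      rw [show 2 * Real.pi * (k₀:ℝ) = ((2 * k₀ : ℤ):ℝ) * Real.pi by push_cast; ring]
      exact Real.sin_int_mul_pi _
    rw [hcos, hsin]
    have hcosh : Complex.cosh ((ε * gx n : ℝ) : ℂ) = ((2 * n + 1 : ℝ) : ℂ) := by
      rw [← Complex.ofReal_cosh]
      congr 1
      rw [hε]
      split_ifs
      · rw [one_mul]; exact gx_cosh n
      · rw [show (-1 : ℝ) * gx n = -(gx n) by ring, Real.cosh_neg]; exact gx_cosh n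
    rw [hcosh]
    push_cast
    ring

/-- Little Picard: an entire function omitting two values is constant. -/
lemma picard_core (W : ℂ → ℂ) (hW : Differentiable ℂ W) (a b : ℂ) (hab : a ≠ b)
    (ha : ∀ z, W z ≠ a) (hb : ∀ z, W z ≠ b) (z z' : ℂ) : W z = W z' := by
  have hba : b - a ≠ 0 := sub_ne_zero.mpr (Ne.symm hab)
  set f : ℂ → ℂ := fun w => (W w - a) / (b - a) with hfdef
  have hfd : Differentiable ℂ f := (hW.sub_const a).div_const _
  have hf0 : ∀ w, f w ≠ 0 := fun w => div_ne_zero (sub_ne_zero.mpr (ha w)) hba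
  have hf1 : ∀ w, f w ≠ 1 := by
    intro w h1
    apply hb w
    have h2 : W w - a = b - a := by
      rw [hfdef] at h1
      exact (div_eq_one_iff_eq hba).mp h1
    have := sub_left_inj.mp h2
    exact this
  obtain ⟨ℓ, hℓd, hℓ⟩ := entire_log f hfd hf0
  have h2πI : (2 * (Real.pi : ℂ) * I) ≠ 0 := by
    simp [Real.pi_ne_zero, I_ne_zero]
  set u : ℂ → ℂ := fun w => ℓ w / (2 * (Real.pi : ℂ) * I) with hudef
  have hud : Differentiable ℂ u := hℓd.div_const _
  have huZ : ∀ w, ∀ m : ℤ, u w ≠ (m : ℂ) := by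
    intro w m hm
    apply hf1 w
    have hℓw : ℓ w = (m : ℂ) * (2 * (Real.pi : ℂ) * I) := by
      rw [hudef] at hm
      field_simp at hm
      linear_combination hm
    rw [← hℓ w, hℓw]
    exact Complex.exp_int_mul_two_pi_mul_I m
  have hu0 : ∀ w, u w ≠ 0 := fun w => by simpa using huZ w 0
  have hu1 : ∀ w, u w ≠ 1 := fun w => by simpa using huZ w 1
  obtain ⟨p, hpd, hp2⟩ := entire_sqrt u hud hu0
  obtain ⟨q, hqd, hq2⟩ := entire_sqrt (fun w => u w - 1) (hud.sub_const 1)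
    (fun w => sub_ne_zero.mpr (hu1 w))
  have hpq : ∀ w, (p w - q w) * (p w + q w) = 1 := by
    intro w
    have h1 := hp2 w
    have h2 := hq2 w
    linear_combination h1 - h2
  have hpq0 : ∀ w, p w - q w ≠ 0 := by
    intro w h0
    have := hpq w
    rw [h0, zero_mul] at this
    exact zero_ne_one this
  obtain ⟨L, hLd, hL⟩ := entire_log (fun w => p w - q w) (hpd.sub hqd) hpq0
  set V : ℂ → ℂ := fun w => 2 * L w with hVdef
  have hVd : Differentiable ℂ V := hLd.const_mul 2
  have key : ∀ w, Complex.cosh (V w) = 2 * u w - 1 := by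
    intro w
    have he : Complex.exp (L w) = p w - q w := hL w
    have h1 : Complex.exp (V w) = (p w - q w) ^ 2 := by
      rw [hVdef]
      show Complex.exp (2 * L w) = _
      rw [show (2 : ℂ) * L w = L w + L w by ring, Complex.exp_add, he, sq]
    have hinv : (p w - q w) ^ 2 * (p w + q w) ^ 2 = 1 := by
      rw [← mul_pow, hpq w, one_pow]
    have h2 : Complex.exp (-V w) = (p w + q w) ^ 2 := by
      rw [Complex.exp_neg, h1]
      exact inv_eq_of_mul_eq_one_right hinv
    show (Complex.exp (V w) + Complex.exp (-V w)) / 2 = 2 * u w - 1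
    rw [h1, h2]
    have h3 := hp2 w
    have h4 := hq2 w
    linear_combination h3 + h4
  -- V is constant
  have hVconst : V z = V z' := by
    by_cases hder : ∀ w, deriv V w = 0
    · exact is_const_of_deriv_eq_zero hVd hder z z'
    · exfalso
      push_neg at hder
      obtain ⟨w₀, hw₀⟩ := hder
      obtain ⟨c, hc⟩ := landau V hVd hw₀ 6 (by norm_num)
      obtain ⟨ω, hω6, m, hcoshω⟩ := grid_exists c
      have hωmem : ω ∈ closedBall c 6 := mem_closedBall.mpr hω6
      obtain ⟨w₁, hw₁⟩ := hc hωmem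
      have : 2 * u w₁ - 1 = 2 * (m : ℂ) + 1 := by
        rw [← key w₁, hw₁, hcoshω]
      apply huZ w₁ ((m : ℤ) + 1)
      push_cast
      linear_combination this / 2
  -- transfer constancy back
  have hL' : L z = L z' := mul_left_cancel₀ two_ne_zero hVconst
  have hpq1 : p z - q z = p z' - q z' := by rw [← hL z, ← hL z', hL']
  have hpq2 : p z + q z = p z' + q z' := by
    have h1 := hpq z
    have h2 := hpq z'
    rw [hpq1] at h1
    exact mul_left_cancel₀ (hpq1 ▸ hpq0 z) (h1.trans h2.symm)
  have hp' : p z = p z' := by linear_combination (hpq1 + hpq2) / 2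
  have hu' : u z = u z' := by rw [← hp2 z, ← hp2 z', hp']
  have hℓ' : ℓ z = ℓ z' := by
    have : ℓ z / (2 * (Real.pi : ℂ) * I) = ℓ z' / (2 * (Real.pi : ℂ) * I) := hu'
    field_simp at this
    exact this
  have hf' : f z = f z' := by rw [← hℓ z, ← hℓ z', hℓ']
  have : (W z - a) / (b - a) = (W z' - a) / (b - a) := hf'
  field_simp at this
  linear_combination this

/-- A transcendental entire function is not a polynomial. -/
lemma g_ne_poly (g : ℂ → ℂ)
    (htrans : ∀ R : MvPolynomial (Fin 2) ℂ,
      (∀ z : ℂ, MvPolynomial.eval ![z, g z] R = 0) → R = 0)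
    (P : Polynomial ℂ) (hP : ∀ z, g z = P.eval z) : False := by
  set R : MvPolynomial (Fin 2) ℂ :=
    MvPolynomial.X 1 - P.eval₂ MvPolynomial.C (MvPolynomial.X 0) with hRdef
  have heval : ∀ v : Fin 2 → ℂ, MvPolynomial.eval v R = v 1 - P.eval (v 0) := by
    intro v
    rw [hRdef, map_sub, MvPolynomial.eval_X]
    congr 1
    rw [Polynomial.hom_eval₂, MvPolynomial.eval_X]
    have hcomp : (MvPolynomial.eval v).comp (MvPolynomial.C (σ := Fin 2)) =
        RingHom.id ℂ := by
      ext r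
      simp
    rw [hcomp]
    rfl
  have hR0 : R = 0 := by
    apply htrans
    intro z
    rw [heval]
    simp [Matrix.cons_val_one, Matrix.head_cons, hP z]
  have h1 := heval ![0, P.eval 0 + 1]
  rw [hR0] at h1
  simp [Matrix.cons_val_one, Matrix.head_cons] at h1

/-- For a transcendental entire function `g`, a nonzero polynomial `Q`, and
`α ∈ ℂ`, there is at most one `ε ∈ ℂ` such that `α` is not in the image of
`z ↦ g(z) + ε·Q(z)`. -/
theorem at_most_one_exceptional_epsilon
    (g : ℂ → ℂ) (hg : Differentiable ℂ g)
    (htrans : ∀ R : MvPolynomial (Fin 2) ℂ,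
      (∀ z : ℂ, MvPolynomial.eval ![z, g z] R = 0) → R = 0)
    (Q : Polynomial ℂ) (hQ : Q ≠ 0) (α : ℂ) :
    {ε : ℂ | α ∉ Set.range fun z => g z + ε * Q.eval z}.Subsingleton := by
  intro ε₁ hε₁ ε₂ hε₂
  by_contra hne
  rw [Set.mem_setOf_eq] at hε₁ hε₂
  have hQd : Differentiable ℂ fun z => Q.eval z := Q.differentiable
  set f₁ : ℂ → ℂ := fun z => g z + ε₁ * Q.eval z - α with hf₁def
  set f₂ : ℂ → ℂ := fun z => g z + ε₂ * Q.eval z - α with hf₂def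
  have hf₁0 : ∀ z, f₁ z ≠ 0 := by
    intro z h0
    exact hε₁ ⟨z, by linear_combination h0⟩
  have hf₂0 : ∀ z, f₂ z ≠ 0 := by
    intro z h0
    exact hε₂ ⟨z, by linear_combination h0⟩
  have hf₁d : Differentiable ℂ f₁ := (hg.add (hQd.const_mul ε₁)).sub_const α
  have hf₂d : Differentiable ℂ f₂ := (hg.add (hQd.const_mul ε₂)).sub_const α
  set c : ℂ := ε₂ - ε₁ with hcdef
  have hc : c ≠ 0 := sub_ne_zero.mpr (Ne.symm hne)
  obtain ⟨u, hud, hu⟩ := entire_log f₁ hf₁d hf₁0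
  obtain ⟨v, hvd, hv⟩ := entire_log f₂ hf₂d hf₂0
  set w : ℂ → ℂ := fun z => v z - u z with hwdef
  have hwd : Differentiable ℂ w := hvd.sub hud
  have hkey : ∀ z, Complex.exp (u z) * (Complex.exp (w z) - 1) = c * Q.eval z := by
    intro z
    have h1 : Complex.exp (u z) * Complex.exp (w z) = f₂ z := by
      rw [← Complex.exp_add, hwdef]
      show Complex.exp (u z + (v z - u z)) = f₂ z
      rw [show u z + (v z - u z) = v z by ring, hv]
    have h2 := hu z
    rw [mul_sub, h1, mul_one, h2]
    rw [hf₁def, hf₂def, hcdef]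
    ring
  -- the set of lattice values hit by w is finite
  set T : Set ℂ := w '' {z | Q.IsRoot z} with hTdef
  have hTfin : T.Finite := (Polynomial.finite_setOf_isRoot hQ).image w
  set S : Set ℤ := {k : ℤ | ((k : ℂ) * (2 * Real.pi * I)) ∈ T} with hSdef
  have hSfin : S.Finite := by
    have hinj : Function.Injective (fun k : ℤ => ((k : ℂ) * (2 * Real.pi * I))) := by
      intro k₁ k₂ h
      have h2πI : (2 * (Real.pi : ℂ) * I) ≠ 0 := by
        simp [Real.pi_ne_zero, I_ne_zero]
      have := mul_right_cancel₀ h2πI h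
      exact_mod_cast this
    exact Set.Finite.preimage hinj.injOn hTfin
  obtain ⟨k₁, hk₁, k₂, hk₂, hk₁₂⟩ := (hSfin.infinite_compl).nontrivial
  have homit : ∀ k : ℤ, k ∉ S → ∀ z, w z ≠ (k : ℂ) * (2 * Real.pi * I) := by
    intro k hk z hzeq
    apply hk
    rw [hSdef, Set.mem_setOf_eq, hTdef]
    have hQz : Q.IsRoot z := by
      have h1 := hkey z
      rw [hzeq] at h1
      rw [Complex.exp_int_mul_two_pi_mul_I k, sub_self, mul_zero] at h1
      exact (mul_eq_zero.mp h1.symm).resolve_left hc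
    exact ⟨z, hQz, hzeq⟩
  have hlatne : (k₁ : ℂ) * (2 * Real.pi * I) ≠ (k₂ : ℂ) * (2 * Real.pi * I) := by
    intro h
    have h2πI : (2 * (Real.pi : ℂ) * I) ≠ 0 := by
      simp [Real.pi_ne_zero, I_ne_zero]
    exact hk₁₂ (by exact_mod_cast mul_right_cancel₀ h2πI h)
  have hwconst : ∀ z z', w z = w z' :=
    fun z z' => picard_core w hwd _ _ hlatne (homit k₁ hk₁) (homit k₂ hk₂) z z'
  -- conclude f₂ = λ • f₁
  set lam : ℂ := Complex.exp (w 0) with hlamdef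
  have hrel : ∀ z, (lam - 1) * f₁ z = c * Q.eval z := by
    intro z
    have h1 := hkey z
    rw [hwconst z 0] at h1
    rw [← hu z]
    rw [hlamdef]
    linear_combination h1
  by_cases hlam1 : lam = 1
  · apply hQ
    apply Polynomial.funext
    intro z
    have := hrel z
    rw [hlam1, sub_self, zero_mul] at this
    have hQz : Q.eval z = 0 := by
      rcases mul_eq_zero.mp this.symm with h | h
      · exact absurd h hc
      · exact h
    simp [hQz]
  · -- g is a polynomial
    have hlamne : lam - 1 ≠ 0 := sub_ne_zero.mpr hlam1
    apply g_ne_poly g htrans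
      (Polynomial.C (c / (lam - 1) - ε₁) * Q + Polynomial.C α)
    intro z
    have h1 := hrel z
    have h2 : f₁ z = c / (lam - 1) * Q.eval z := by
      field_simp
      linear_combination h1
    rw [hf₁def] at h2
    simp only [Polynomial.eval_add, Polynomial.eval_mul, Polynomial.eval_C]
    linear_combination h2
end

section
/- Every entire function f: ℂ → ℂ that is not a polynomial function is transcendental; that is, if f is entire and there exists a nonzero polynomial P ∈ ℂ[x, y] with P(z, f(z)) = 0 for all z ∈ ℂ, then f is a polynomial function. -/
open scoped Real NNReal
open Complex Polynomial Finset Filter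

noncomputable def phi : MvPolynomial (Fin 2) ℂ →+* Polynomial (Polynomial ℂ) :=
  MvPolynomial.eval₂Hom (Polynomial.C.comp Polynomial.C)
    ![Polynomial.C Polynomial.X, Polynomial.X]

lemma phi_injective : Function.Injective phi := by
  have e1 := MvPolynomial.renameEquiv ℂ (Equiv.swap (0 : Fin 2) 1)
  have e2 := MvPolynomial.finSuccEquiv ℂ 1
  have e3 := MvPolynomial.finSuccEquiv ℂ 0
  have e4 := MvPolynomial.isEmptyAlgEquiv ℂ (Fin 0)
  set e5 : MvPolynomial (Fin 1) ℂ ≃+* Polynomial ℂ :=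
    (MvPolynomial.finSuccEquiv ℂ 0).toRingEquiv.trans
      (Polynomial.mapEquiv (MvPolynomial.isEmptyAlgEquiv ℂ (Fin 0)).toRingEquiv) with he5
  set ψ : MvPolynomial (Fin 2) ℂ ≃+* Polynomial (Polynomial ℂ) :=
    ((MvPolynomial.renameEquiv ℂ (Equiv.swap (0 : Fin 2) 1)).toRingEquiv.trans
      (MvPolynomial.finSuccEquiv ℂ 1).toRingEquiv).trans
      (Polynomial.mapEquiv e5) with hψ
  have : phi = (ψ : MvPolynomial (Fin 2) ℂ →+* Polynomial (Polynomial ℂ)) := by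
    apply MvPolynomial.ringHom_ext
    · intro c
      simp only [phi, hψ, he5, MvPolynomial.eval₂Hom_C, RingEquiv.trans_apply,
        Polynomial.mapEquiv_apply, AlgEquiv.coe_ringEquiv, MvPolynomial.renameEquiv_apply,
        MvPolynomial.rename_C, RingHom.coe_coe, RingHom.comp_apply, AlgEquiv.coe_ringEquiv']
      rw [show (MvPolynomial.finSuccEquiv ℂ 1) (MvPolynomial.C c)
          = Polynomial.C (MvPolynomial.C c) from by
            rw [MvPolynomial.finSuccEquiv_apply]; simp, Polynomial.map_C]
      congr 1
      simp only [RingHom.coe_coe]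
      rw [RingEquiv.trans_apply]
      simp only [AlgEquiv.coe_ringEquiv', Polynomial.mapEquiv_apply]
      rw [show (MvPolynomial.finSuccEquiv ℂ 0) (MvPolynomial.C c)
          = Polynomial.C (MvPolynomial.C c) from by
            rw [MvPolynomial.finSuccEquiv_apply]; simp, Polynomial.map_C]
      simp
      exact (MvPolynomial.coeff_zero_C c).symm
    · intro i
      fin_cases i
      · simp [phi, hψ, he5, Equiv.swap_apply_left]
        rw [show ((1 : Fin 2) = (0 : Fin 1).succ) from rfl, MvPolynomial.finSuccEquiv_X_succ]
        simp [MvPolynomial.finSuccEquiv_X_zero]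
      · simp [phi, hψ, he5, Equiv.swap_apply_right]
        rw [MvPolynomial.finSuccEquiv_X_zero]
        simp
  rw [this]
  exact ψ.injective

lemma phi_eval (P : MvPolynomial (Fin 2) ℂ) (z w : ℂ) :
    Polynomial.eval₂ (Polynomial.evalRingHom z) w (phi P) = MvPolynomial.eval ![z, w] P := by
  rw [phi, show Polynomial.eval₂ (Polynomial.evalRingHom z) w (MvPolynomial.eval₂Hom
      (Polynomial.C.comp Polynomial.C) ![Polynomial.C Polynomial.X, Polynomial.X] P)
    = (Polynomial.eval₂RingHom (Polynomial.evalRingHom z) w)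
      (MvPolynomial.eval₂ (Polynomial.C.comp Polynomial.C)
        ![Polynomial.C Polynomial.X, Polynomial.X] P) from rfl,
    MvPolynomial.eval₂_comp_left]
  have h1 : (Polynomial.eval₂RingHom (Polynomial.evalRingHom z) w).comp
      (Polynomial.C.comp Polynomial.C) = RingHom.id ℂ := by
    refine RingHom.ext fun c => ?_
    simp
  have h2 : ((Polynomial.eval₂RingHom (Polynomial.evalRingHom z) w) ∘
      ![Polynomial.C Polynomial.X, Polynomial.X]) = ![z, w] := by
    funext i
    fin_cases i <;> simp
  rw [h1, h2]
  rfl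

lemma growth_lemma (f : ℂ → ℂ) (hf : Differentiable ℂ f) (C : ℝ) (m : ℕ)
    (hb : ∀ z : ℂ, ‖f z‖ ≤ C * (1 + ‖z‖) ^ m) :
    ∃ Q : Polynomial ℂ, ∀ z : ℂ, f z = Q.eval z := by
  have hC0 : 0 ≤ C := by
    have := hb 0
    nlinarith [norm_nonneg (f 0), pow_pos (by norm_num : (0:ℝ) < 1 + ‖(0:ℂ)‖) m]
  have hball : ∀ R : ℝ≥0, 0 < R →
      HasFPowerSeriesOnBall f (cauchyPowerSeries f 0 R) 0 R := fun R hR =>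
    (hf.differentiableOn).hasFPowerSeriesOnBall hR
  set p := cauchyPowerSeries f 0 1 with hp
  have hpR : ∀ R : ℝ≥0, 0 < R → cauchyPowerSeries f 0 R = p := by
    intro R hR
    exact ((hball R hR).hasFPowerSeriesAt).eq_formalMultilinearSeries
      ((hball 1 one_pos).hasFPowerSeriesAt)
  -- Cauchy estimate
  have hest : ∀ (R : ℝ≥0), 1 ≤ R → ∀ n : ℕ,
      ‖p n‖ ≤ C * 2 ^ m * R ^ m / R ^ n := by
    intro R hR n
    have hR0 : (0:ℝ) < R := lt_of_lt_of_le one_pos hR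
    have h1 := norm_cauchyPowerSeries_le f 0 (R : ℝ) n
    rw [hpR R (by exact_mod_cast hR0)] at h1
    have hint : (∫ θ : ℝ in (0)..2 * π, ‖f (circleMap 0 R θ)‖) ≤
        2 * π * (C * (1 + R) ^ m) := by
      have : (∫ θ : ℝ in (0)..2 * π, ‖f (circleMap 0 R θ)‖) ≤
          ∫ _ : ℝ in (0)..2 * π, C * (1 + (R:ℝ)) ^ m := by
        apply intervalIntegral.integral_mono_on Real.two_pi_pos.le
        · exact ((hf.continuous.norm).comp (continuous_circleMap 0 R)).intervalIntegrable 0 (2*π)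
        · exact intervalIntegrable_const
        · intro θ _
          have h2 := hb (circleMap 0 R θ)
          have h3 : ‖circleMap 0 (R:ℝ) θ‖ = R := by
            simp [norm_circleMap_zero, abs_of_pos hR0]
          rwa [h3] at h2
      calc (∫ θ : ℝ in (0)..2 * π, ‖f (circleMap 0 R θ)‖)
          ≤ ∫ _ : ℝ in (0)..2 * π, C * (1 + (R:ℝ)) ^ m := this
        _ = 2 * π * (C * (1 + R) ^ m) := by
            simp [intervalIntegral.integral_const]; ring
    calc ‖p n‖ ≤ ((2 * π)⁻¹ * ∫ θ : ℝ in (0)..2 * π, ‖f (circleMap 0 R θ)‖) * |(R:ℝ)|⁻¹ ^ n := h1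
      _ ≤ ((2 * π)⁻¹ * (2 * π * (C * (1 + R) ^ m))) * |(R:ℝ)|⁻¹ ^ n := by
          apply mul_le_mul_of_nonneg_right
          · exact mul_le_mul_of_nonneg_left hint (by positivity)
          · positivity
      _ = C * (1 + R) ^ m / R ^ n := by
          rw [abs_of_pos hR0, inv_mul_cancel_left₀ (by positivity : (2*π:ℝ) ≠ 0), inv_pow,
            div_eq_mul_inv]
      _ ≤ C * 2 ^ m * R ^ m / R ^ n := by
          apply div_le_div_of_nonneg_right ?_ (by positivity)
          · calc C * (1 + (R:ℝ)) ^ m ≤ C * (R + R) ^ m := by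
                  apply mul_le_mul_of_nonneg_left _ hC0
                  have h1R : (1:ℝ) ≤ R := by exact_mod_cast hR
                  exact pow_le_pow_left₀ (by positivity) (by linarith) m
              _ = C * 2 ^ m * R ^ m := by ring
  -- vanishing of high coefficients
  have hvan : ∀ n : ℕ, m < n → p n = 0 := by
    intro n hn
    rw [← norm_eq_zero]
    have hn0 : ∀ (R : ℝ≥0), 1 ≤ R → ‖p n‖ ≤ C * 2 ^ m / R := by
      intro R hR
      refine (hest R hR n).trans ?_
      have hR0 : (0:ℝ) < R := lt_of_lt_of_le one_pos hR
      rw [div_le_div_iff₀ (by positivity) hR0]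
      calc C * 2 ^ m * (R:ℝ) ^ m * R = C * 2 ^ m * R ^ (m+1) := by ring
        _ ≤ C * 2 ^ m * R ^ n := by
            apply mul_le_mul_of_nonneg_left _ (by positivity)
            exact pow_le_pow_right₀ (by exact_mod_cast hR) (by omega)
    have h0 : ‖p n‖ ≤ 0 := by
      refine le_of_forall_gt_imp_ge_of_dense fun ε hε => ?_
      set R : ℝ≥0 := 1 + ⟨C * 2 ^ m / ε, by positivity⟩ with hRdef
      refine (hn0 R (by rw [hRdef]; exact le_self_add)).trans ?_
      rw [div_le_iff₀ (by positivity : (0:ℝ) < R)]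
      have : (R : ℝ) = 1 + C * 2 ^ m / ε := by
        rw [hRdef]; exact (NNReal.coe_add _ _).trans (by rw [NNReal.coe_one]; rfl)
      rw [this]
      have : C * 2 ^ m / ε * ε = C * 2 ^ m := div_mul_cancel₀ _ (ne_of_gt hε)
      nlinarith
    exact le_antisymm h0 (norm_nonneg _)
  -- build polynomial
  refine ⟨∑ k ∈ Finset.range (m + 1), Polynomial.C (p.coeff k) * Polynomial.X ^ k, fun z => ?_⟩
  have hRz : (0:ℝ) < 1 + ‖z‖ := by positivity
  set R : ℝ≥0 := ⟨1 + ‖z‖, hRz.le⟩ with hRdef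
  have hR0 : (0:ℝ≥0) < R := by
    rw [hRdef]; exact_mod_cast hRz
  have hmem : z ∈ Metric.eball (0 : ℂ) R := by
    rw [EMetric.mem_ball, edist_zero_right]
    rw [show ‖z‖ₑ = ENNReal.ofNNReal ⟨‖z‖, norm_nonneg z⟩ from rfl]
    exact ENNReal.coe_lt_coe.mpr (by simp [hRdef, ← NNReal.coe_lt_coe] : (⟨‖z‖, norm_nonneg z⟩ : ℝ≥0) < R)
  have hsum := (hball R hR0).sum hmem
  rw [hpR R hR0] at hsum
  simp only [zero_add] at hsum
  rw [hsum]
  rw [FormalMultilinearSeries.sum]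
  rw [tsum_eq_sum (s := Finset.range (m+1)) (fun n hn => by
    rw [hvan n (by simpa using hn)]; simp)]
  rw [Polynomial.eval_finset_sum]
  apply Finset.sum_congr rfl
  intro k _
  rw [p.apply_eq_pow_smul_coeff, Polynomial.eval_mul, Polynomial.eval_C, Polynomial.eval_pow,
    Polynomial.eval_X, smul_eq_mul, mul_comm]

lemma eval_norm_le_aux (a : Polynomial ℂ) (M : ℕ) (hM : a.natDegree ≤ M) (z : ℂ) :
    ‖a.eval z‖ ≤ (∑ k ∈ Finset.range (a.natDegree + 1), ‖a.coeff k‖) * (1 + ‖z‖) ^ M := by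
  conv_lhs => rw [Polynomial.eval_eq_sum_range]
  refine (norm_sum_le _ _).trans ?_
  rw [Finset.sum_mul]
  apply Finset.sum_le_sum
  intro k hk
  rw [norm_mul, norm_pow]
  apply mul_le_mul_of_nonneg_left _ (norm_nonneg _)
  calc ‖z‖ ^ k ≤ (1 + ‖z‖) ^ k := by
        apply pow_le_pow_left₀ (norm_nonneg z); linarith
    _ ≤ (1 + ‖z‖) ^ M := by
        apply pow_le_pow_right₀ (by linarith [norm_nonneg z])
        have := Finset.mem_range.1 hk; omega

lemma leading_lower_bound (a : Polynomial ℂ) (ha : a ≠ 0) :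
    ∃ ε : ℝ, 0 < ε ∧ ∃ r : ℝ, ∀ z : ℂ, r ≤ ‖z‖ → ε ≤ ‖a.eval z‖ := by
  by_cases hd : 0 < a.degree
  · refine ⟨1, one_pos, ?_⟩
    have ht : Filter.Tendsto (fun z : ℂ => ‖a.eval z‖) (Filter.comap norm Filter.atTop)
        Filter.atTop := a.tendsto_norm_atTop hd Filter.tendsto_comap
    have hev : ∀ᶠ z : ℂ in Filter.comap norm Filter.atTop, 1 ≤ ‖a.eval z‖ :=
      ht.eventually (Filter.eventually_ge_atTop 1)
    rw [Filter.eventually_comap] at hev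
    rw [Filter.eventually_atTop] at hev
    obtain ⟨r, hr⟩ := hev
    exact ⟨r, fun z hz => hr ‖z‖ hz z rfl⟩
  · have h0 : a.natDegree = 0 := by
      rw [Polynomial.natDegree_eq_zero_iff_degree_le_zero]
      exact le_of_not_gt hd
    have hc : a = Polynomial.C (a.coeff 0) := Polynomial.eq_C_of_natDegree_eq_zero h0
    have hc0 : a.coeff 0 ≠ 0 := fun h => ha (by rw [hc, h, map_zero])
    refine ⟨‖a.coeff 0‖, norm_pos_iff.2 hc0, 0, fun z _ => ?_⟩
    rw [hc]; simp

lemma poly_bound_of_alg (f : ℂ → ℂ) (hf : Differentiable ℂ f)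
    (Q : Polynomial (Polynomial ℂ)) (hQ0 : Q ≠ 0)
    (hQrel : ∀ z : ℂ, Polynomial.eval₂ (Polynomial.evalRingHom z) (f z) Q = 0) :
    ∃ (C : ℝ) (m : ℕ), ∀ z : ℂ, ‖f z‖ ≤ C * (1 + ‖z‖) ^ m := by
  set n := Q.natDegree with hn
  rcases Nat.eq_zero_or_pos n with hn0 | hn0
  · exfalso
    have hc : Q = Polynomial.C (Q.coeff 0) := Polynomial.eq_C_of_natDegree_eq_zero hn0
    have hc0 : Q.coeff 0 ≠ 0 := fun h => hQ0 (by rw [hc, h, map_zero])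
    apply hc0
    apply Polynomial.zero_of_eval_zero
    intro z
    have := hQrel z
    rw [hc, Polynomial.eval₂_C] at this
    simpa using this
  -- main case
  have hsum : ∀ z : ℂ, ∑ i ∈ Finset.range (n + 1),
      (Q.coeff i).eval z * (f z) ^ i = 0 := by
    intro z
    have := hQrel z
    rwa [Polynomial.eval₂_eq_sum_range] at this
  set an := Q.coeff n with han
  have han0 : an ≠ 0 := by
    rw [han, hn, ← Polynomial.leadingCoeff]
    exact Polynomial.leadingCoeff_ne_zero.2 hQ0
  obtain ⟨ε, hε, r, hr⟩ := leading_lower_bound an han0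
  obtain ⟨B, D, hB0, hS⟩ : ∃ (B : ℝ) (D : ℕ), 0 ≤ B ∧
      ∀ z : ℂ, ∑ i ∈ Finset.range n, ‖(Q.coeff i).eval z‖ ≤ B * (1 + ‖z‖) ^ D := by
    refine ⟨∑ i ∈ Finset.range n, ∑ k ∈ Finset.range ((Q.coeff i).natDegree + 1),
      ‖(Q.coeff i).coeff k‖, (Finset.range n).sup fun i => (Q.coeff i).natDegree,
      Finset.sum_nonneg fun i _ => Finset.sum_nonneg fun k _ => norm_nonneg _, ?_⟩
    intro z
    rw [Finset.sum_mul]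
    apply Finset.sum_le_sum
    intro i hi
    exact eval_norm_le_aux _ _ (Finset.le_sup (f := fun i => (Q.coeff i).natDegree) hi) z
  -- bound for large z
  have hbig : ∀ z : ℂ, r ≤ ‖z‖ → ‖f z‖ ≤ 1 + (B / ε) * (1 + ‖z‖) ^ D := by
    intro z hz
    rcases le_or_gt ‖f z‖ 1 with h1 | h1
    · have : 0 ≤ (B / ε) * (1 + ‖z‖) ^ D := by positivity
      linarith
    · have h1 : 1 ≤ ‖f z‖ := h1.le
      have hfz0 : 0 < ‖f z‖ ^ (n - 1) := by positivity
      -- rearrange relation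
      have hrel2 : an.eval z * (f z) ^ n =
          -∑ i ∈ Finset.range n, (Q.coeff i).eval z * (f z) ^ i := by
        have := hsum z
        rw [Finset.sum_range_succ] at this
        linear_combination this
      have hnorm : ‖an.eval z‖ * ‖f z‖ ^ n ≤
          (∑ i ∈ Finset.range n, ‖(Q.coeff i).eval z‖) * ‖f z‖ ^ (n - 1) := by
        rw [← norm_pow, ← norm_mul, hrel2, norm_neg]
        refine (norm_sum_le _ _).trans ?_
        rw [Finset.sum_mul]
        apply Finset.sum_le_sum
        intro i hi
        rw [norm_mul, norm_pow]
        apply mul_le_mul_of_nonneg_left _ (norm_nonneg _)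
        exact pow_le_pow_right₀ h1 (by have := Finset.mem_range.1 hi; omega)
      have hkey : ε * ‖f z‖ ≤ B * (1 + ‖z‖) ^ D := by
        have h2 : ε * (‖f z‖ ^ (n - 1) * ‖f z‖) ≤
            (B * (1 + ‖z‖) ^ D) * ‖f z‖ ^ (n - 1) := by
          have e1 : ‖f z‖ ^ (n - 1) * ‖f z‖ = ‖f z‖ ^ n := by
            rw [← pow_succ]; congr 1; omega
          rw [e1]
          calc ε * ‖f z‖ ^ n ≤ ‖an.eval z‖ * ‖f z‖ ^ n :=
                mul_le_mul_of_nonneg_right (hr z hz) (by positivity)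
            _ ≤ (∑ i ∈ Finset.range n, ‖(Q.coeff i).eval z‖) * ‖f z‖ ^ (n - 1) := hnorm
            _ ≤ (B * (1 + ‖z‖) ^ D) * ‖f z‖ ^ (n - 1) :=
                mul_le_mul_of_nonneg_right (hS z) (by positivity)
        have h3 : (ε * ‖f z‖) * ‖f z‖ ^ (n - 1) ≤
            (B * (1 + ‖z‖) ^ D) * ‖f z‖ ^ (n - 1) := by
          calc (ε * ‖f z‖) * ‖f z‖ ^ (n - 1) = ε * (‖f z‖ ^ (n - 1) * ‖f z‖) := by ring
            _ ≤ _ := h2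
        exact le_of_mul_le_mul_right h3 hfz0
      have h6 : ‖f z‖ ≤ B * (1 + ‖z‖) ^ D / ε := by
        rw [le_div_iff₀ hε]; nlinarith
      have h7 : B * (1 + ‖z‖) ^ D / ε = (B / ε) * (1 + ‖z‖) ^ D := by ring
      linarith [h6, h7.le]
  -- bound on compact part
  obtain ⟨K, hK⟩ := (isCompact_closedBall (0:ℂ) (|r|)).exists_bound_of_continuousOn
    hf.continuous.continuousOn (f := f)
  refine ⟨max K 0 + 1 + B / ε, D, fun z => ?_⟩
  have hpow1 : (1:ℝ) ≤ (1 + ‖z‖) ^ D := one_le_pow₀ (by linarith [norm_nonneg z])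
  rcases le_or_gt r ‖z‖ with hz | hz
  · calc ‖f z‖ ≤ 1 + (B / ε) * (1 + ‖z‖) ^ D := hbig z hz
      _ ≤ (max K 0 + 1 + B / ε) * (1 + ‖z‖) ^ D := by
          have h4 : 0 ≤ max K 0 := le_max_right _ _
          have h5 : 0 ≤ B / ε := by positivity
          nlinarith
  · have hzball : z ∈ Metric.closedBall (0:ℂ) (|r|) := by
      rw [Metric.mem_closedBall, dist_zero_right]
      exact hz.le.trans (le_abs_self r)
    calc ‖f z‖ ≤ K := hK z hzball
      _ ≤ max K 0 := le_max_left _ _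
      _ ≤ (max K 0 + 1 + B / ε) * 1 := by
          have h5 : 0 ≤ B / ε := by positivity
          have h4 : 0 ≤ max K 0 := le_max_right _ _
          linarith
      _ ≤ (max K 0 + 1 + B / ε) * (1 + ‖z‖) ^ D := by
          apply mul_le_mul_of_nonneg_left hpow1
          have h5 : 0 ≤ B / ε := by positivity
          have h4 : 0 ≤ max K 0 := le_max_right _ _
          linarith

/-- Every entire function that satisfies a nontrivial polynomial relation
`P(z, f(z)) = 0` is a polynomial function; equivalently, every entire
non-polynomial function is transcendental. -/
theorem entire_algebraic_is_polynomial
    (f : ℂ → ℂ) (hf : Differentiable ℂ f)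
    (P : MvPolynomial (Fin 2) ℂ) (hP : P ≠ 0)
    (hrel : ∀ z : ℂ, MvPolynomial.eval ![z, f z] P = 0) :
    ∃ Q : Polynomial ℂ, ∀ z : ℂ, f z = Q.eval z := by
  have hQ0 : phi P ≠ 0 := fun h => hP (phi_injective (h.trans (map_zero phi).symm))
  have hQrel : ∀ z : ℂ, Polynomial.eval₂ (Polynomial.evalRingHom z) (f z) (phi P) = 0 :=
    fun z => by rw [phi_eval]; exact hrel z
  obtain ⟨C, m, hb⟩ := poly_bound_of_alg f hf (phi P) hQ0 hQrel
  exact growth_lemma f hf C m hb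
end
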